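/- arXiv:0901.2044 — 4 statements merged into one kernel-verified Lean document; each statement's English description precedes it below -/
import Mathlib

section
/- Suppose for every j ∈ {1,…,M} one has 2|V_j| ≤ ω_j, where V_j = (1/n)∑_{i=1}^n (f_j(X_i) − E f_j(X_i)). Let λ̂ minimize λ ↦ −(2/n)∑_i f_λ(X_i) + ‖f_λ‖² + 2∑_j ω_j|λ_j| over ℝ^M, and let f♠ = f_{λ̂}. Then for every λ ∈ ℝ^M: ‖f♠ − f‖² + ∑_{j=1}^M ω_j|λ̂_j − λ_j| ≤ ‖f_λ − f‖² + 4∑_{j∈J(λ)} ω_j|λ̂_j − λ_j|, where J(λ) = {j : λ_j ≠ 0}. -/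
open MeasureTheory Finset

/-- On the event where 2|V_j| ≤ ω_j for all j, the SPADES minimizer λ̂
satisfies, for every λ,
‖f♠ − f‖² + ∑_j ω_j|λ̂_j − λ_j| ≤ ‖f_λ − f‖² + 4∑_{j∈J(λ)} ω_j|λ̂_j − λ_j|. -/
theorem spades_basic_oracle {d n M : ℕ} (hn : 0 < n)
    (X : Fin n → (Fin d → ℝ)) (f : (Fin d → ℝ) → ℝ)
    (fj : Fin M → (Fin d → ℝ) → ℝ) (ω : Fin M → ℝ) (hω : ∀ j, 0 < ω j)
    (hf : MemLp f 2 (volume : Measure (Fin d → ℝ)))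
    (hfj : ∀ j, MemLp (fj j) 2 (volume : Measure (Fin d → ℝ)))
    (hf0 : ∀ x, 0 ≤ f x) (hf1 : ∫ x, f x = 1)
    -- the event: 2|V_j| ≤ ω_j with V_j = (1/n)∑_i f_j(X_i) − E f_j(X_i), E f_j(X_i) = ∫ f_j f
    (hV : ∀ j, 2 * |(n : ℝ)⁻¹ * ∑ i, fj j (X i) - ∫ x, fj j x * f x| ≤ ω j)
    (lamhat : Fin M → ℝ)
    -- λ̂ minimizes the ℓ₁-penalized empirical criterion
    (hmin : ∀ lam : Fin M → ℝ,
      -(2 / n : ℝ) * ∑ i, ∑ j, lamhat j * fj j (X i)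
          + (∫ x, (∑ j, lamhat j * fj j x) ^ 2) + 2 * ∑ j, ω j * |lamhat j|
        ≤ -(2 / n : ℝ) * ∑ i, ∑ j, lam j * fj j (X i)
          + (∫ x, (∑ j, lam j * fj j x) ^ 2) + 2 * ∑ j, ω j * |lam j|) :
    ∀ lam : Fin M → ℝ,
      (∫ x, (∑ j, lamhat j * fj j x - f x) ^ 2) + ∑ j, ω j * |lamhat j - lam j|
        ≤ (∫ x, (∑ j, lam j * fj j x - f x) ^ 2)
          + 4 * ∑ j ∈ univ.filter fun j => lam j ≠ 0, ω j * |lamhat j - lam j| := by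
  intro lam
  have hn' : (n : ℝ) ≠ 0 := Nat.cast_ne_zero.mpr hn.ne'
  set S : Fin M → ℝ := fun j => ∫ x, fj j x * f x with hS
  set T : Fin M → ℝ := fun j => (n : ℝ)⁻¹ * ∑ i, fj j (X i) with hT
  have hjf : ∀ j, Integrable (fun x => fj j x * f x) volume := by
    intro j
    have := (hf.smul (hfj j) :
      MemLp ((fj j) • f) 1 (volume : Measure (Fin d → ℝ)))
    exact memLp_one_iff_integrable.mp this
  -- Expansion of the squared L² distance
  have key : ∀ μ : Fin M → ℝ,
      (∫ x, (∑ j, μ j * fj j x - f x) ^ 2)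
        = (∫ x, (∑ j, μ j * fj j x) ^ 2) - 2 * ∑ j, μ j * S j + ∫ x, (f x) ^ 2 := by
    intro μ
    have hg : MemLp (fun x => ∑ j, μ j * fj j x) 2 (volume : Measure (Fin d → ℝ)) := by
      exact memLp_finset_sum (f := fun j (x : Fin d → ℝ) => μ j * fj j x) Finset.univ
        (fun j _ => ((hfj j).const_mul (μ j)))
    have hg2 : Integrable (fun x => (∑ j, μ j * fj j x) ^ 2) volume := hg.integrable_sq
    have hf2 : Integrable (fun x => (f x) ^ 2) volume := hf.integrable_sq
    have hgf : Integrable (fun x => (∑ j, μ j * fj j x) * f x) volume := by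
      have := (hf.smul hg :
        MemLp ((fun x => ∑ j, μ j * fj j x) • f) 1 (volume : Measure (Fin d → ℝ)))
      exact memLp_one_iff_integrable.mp this
    have e1 : (∫ x, (∑ j, μ j * fj j x - f x) ^ 2)
        = (∫ x, (∑ j, μ j * fj j x) ^ 2) - 2 * (∫ x, (∑ j, μ j * fj j x) * f x)
          + ∫ x, (f x) ^ 2 := by
      have hrw : (fun x => (∑ j, μ j * fj j x - f x) ^ 2)
          = fun x => ((∑ j, μ j * fj j x) ^ 2 - 2 * ((∑ j, μ j * fj j x) * f x))
            + (f x) ^ 2 := by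
        funext x; ring
      have hA : Integrable (fun x =>
          (∑ j, μ j * fj j x) ^ 2 - 2 * ((∑ j, μ j * fj j x) * f x)) volume :=
        hg2.sub (hgf.const_mul 2)
      have hB : Integrable (fun x => 2 * ((∑ j, μ j * fj j x) * f x)) volume :=
        hgf.const_mul 2
      rw [hrw, integral_add hA hf2, integral_sub hg2 hB, integral_const_mul]
    have e2 : (∫ x, (∑ j, μ j * fj j x) * f x) = ∑ j, μ j * S j := by
      have hrw : (fun x => (∑ j, μ j * fj j x) * f x)
          = fun x => ∑ j, μ j * (fj j x * f x) := by
        funext x; rw [Finset.sum_mul]; exact Finset.sum_congr rfl fun j _ => by ring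
      rw [hrw, integral_finset_sum _ (fun j _ => ((hjf j).const_mul (μ j)))]
      exact Finset.sum_congr rfl fun j _ => by rw [integral_const_mul]
    rw [e1, e2]
  -- Rewrite the empirical term
  have emp : ∀ μ : Fin M → ℝ,
      -(2 / n : ℝ) * ∑ i, ∑ j, μ j * fj j (X i) = -2 * ∑ j, μ j * T j := by
    intro μ
    rw [Finset.sum_comm]
    rw [Finset.mul_sum, Finset.mul_sum]
    refine Finset.sum_congr rfl fun j _ => ?_
    rw [← Finset.mul_sum, hT]
    field_simp
  -- the minimization inequality in clean form
  have hmin' := hmin lam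
  rw [emp lamhat, emp lam] at hmin'
  -- termwise inequality
  have termwise : ∀ j : Fin M,
      2 * (lamhat j - lam j) * (T j - S j) + 2 * ω j * (|lam j| - |lamhat j|)
          + ω j * |lamhat j - lam j|
        ≤ (if lam j ≠ 0 then 4 * (ω j * |lamhat j - lam j|) else 0) := by
    intro j
    have hVj : 2 * |T j - S j| ≤ ω j := hV j
    have habs : 2 * (lamhat j - lam j) * (T j - S j) ≤ ω j * |lamhat j - lam j| := by
      have h1 : 2 * (lamhat j - lam j) * (T j - S j) ≤ 2 * (|lamhat j - lam j| * |T j - S j|) := by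
        rw [← abs_mul]
        nlinarith [le_abs_self ((lamhat j - lam j) * (T j - S j))]
      have h2 : 2 * (|lamhat j - lam j| * |T j - S j|)
          = |lamhat j - lam j| * (2 * |T j - S j|) := by ring
      have h3 : |lamhat j - lam j| * (2 * |T j - S j|) ≤ |lamhat j - lam j| * ω j :=
        mul_le_mul_of_nonneg_left hVj (abs_nonneg _)
      linarith
    by_cases h0 : lam j = 0
    · simp only [h0, ne_eq, not_true_eq_false, if_false]
      simp only [h0, abs_zero, sub_zero] at habs ⊢
      linarith
    · simp only [h0, ne_eq, not_false_eq_true, if_true]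
      have htri : |lam j| - |lamhat j| ≤ |lamhat j - lam j| := by
        have := abs_sub_abs_le_abs_sub (lam j) (lamhat j)
        rw [abs_sub_comm] at this
        linarith
      have hωj := (hω j).le
      nlinarith
  have hsum := Finset.sum_le_sum (s := (Finset.univ : Finset (Fin M))) (fun j _ => termwise j)
  -- rewrite the filtered sum
  have hfilter : 4 * ∑ j ∈ univ.filter fun j => lam j ≠ 0, ω j * |lamhat j - lam j|
      = ∑ j, (if lam j ≠ 0 then 4 * (ω j * |lamhat j - lam j|) else 0) := by
    rw [Finset.mul_sum, Finset.sum_filter]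
  -- expand the LHS sum of termwise
  have expand : ∑ j, (2 * (lamhat j - lam j) * (T j - S j) + 2 * ω j * (|lam j| - |lamhat j|)
          + ω j * |lamhat j - lam j|)
      = 2 * (∑ j, lamhat j * T j) - 2 * (∑ j, lam j * T j)
        - 2 * (∑ j, lamhat j * S j) + 2 * (∑ j, lam j * S j)
        + 2 * (∑ j, ω j * |lam j|) - 2 * (∑ j, ω j * |lamhat j|)
        + ∑ j, ω j * |lamhat j - lam j| := by
    simp only [Finset.mul_sum, ← Finset.sum_add_distrib, ← Finset.sum_sub_distrib]
    exact Finset.sum_congr rfl fun j _ => by ring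
  rw [key lamhat, key lam]
  rw [hfilter]
  rw [expand] at hsum
  linarith
end

section
/- Let u ∈ ℝ^M, J ⊆ {1,…,M}, and suppose the Gram matrix restricted to indices outside J is positive semidefinite in the sense that ∑_{i,j∉J} ⟨f_i,f_j⟩ u_i u_j ≥ 0 (this always holds since it equals ‖∑_{j∉J} u_j f_j‖²). Define ρ = max_{i∈J} max_{j≠i} |⟨f_i,f_j⟩|/(‖f_i‖‖f_j‖), U(J) = ∑_{j∈J}|u_j|‖f_j‖, U = ∑_{j=1}^M |u_j|‖f_j‖. Then ∑_{j∈J} u_j²‖f_j‖² ≤ ‖∑_{j=1}^M u_j f_j‖² + 2ρ·U(J)·U − ρ·U(J)². -/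
open Finset

/-- local coherence bound:
∑_{j∈J} u_j²‖f_j‖² ≤ ‖∑_j u_j f_j‖² + 2ρ·U(J)·U − ρ·U(J)². -/
theorem spades_local_coherence_bound {M : ℕ} {V : Type*} [NormedAddCommGroup V]
    [InnerProductSpace ℝ V] (f : Fin M → V) (hf : ∀ j, f j ≠ 0)
    (u : Fin M → ℝ) (J : Finset (Fin M)) (ρ : ℝ) (hρ0 : 0 ≤ ρ)
    (hρ : ∀ i ∈ J, ∀ j, j ≠ i → |(inner ℝ (f i) (f j) : ℝ)| ≤ ρ * (‖f i‖ * ‖f j‖)) :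
    ∑ j ∈ J, (u j) ^ 2 * ‖f j‖ ^ 2
      ≤ ‖∑ j, u j • f j‖ ^ 2
        + 2 * ρ * (∑ j ∈ J, |u j| * ‖f j‖) * (∑ j, |u j| * ‖f j‖)
        - ρ * (∑ j ∈ J, |u j| * ‖f j‖) ^ 2 := by
  set a : Fin M → ℝ := fun j => |u j| * ‖f j‖ with ha
  set g : Fin M → Fin M → ℝ := fun i j => u i * u j * inner ℝ (f i) (f j) with hg
  have ha0 : ∀ j, 0 ≤ a j := fun j => mul_nonneg (abs_nonneg _) (norm_nonneg _)
  have hnorm : ∀ s : Finset (Fin M),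
      ‖∑ j ∈ s, u j • f j‖ ^ 2 = ∑ i ∈ s, ∑ j ∈ s, g i j := by
    intro s
    rw [← real_inner_self_eq_norm_sq, sum_inner]
    refine Finset.sum_congr rfl fun i _ => ?_
    rw [real_inner_smul_left, inner_sum, Finset.mul_sum]
    refine Finset.sum_congr rfl fun j _ => ?_
    rw [real_inner_smul_right]
    simp only [hg]; ring
  have hbound : ∀ i ∈ J, ∀ j, j ≠ i → -(ρ * (a i * a j)) ≤ g i j := by
    intro i hi j hj
    have h1 := hρ i hi j hj
    have h2 : |g i j| ≤ ρ * (a i * a j) := by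
      simp only [hg, ha, abs_mul]
      calc |u i| * |u j| * |(inner ℝ (f i) (f j) : ℝ)|
          ≤ |u i| * |u j| * (ρ * (‖f i‖ * ‖f j‖)) := by
            apply mul_le_mul_of_nonneg_left h1 (by positivity)
        _ = ρ * (|u i| * ‖f i‖ * (|u j| * ‖f j‖)) := by ring
    linarith [neg_abs_le (g i j)]
  -- total splitting
  have hsplit : ‖∑ j, u j • f j‖ ^ 2
      = (∑ i ∈ J, ∑ j ∈ J, g i j) + (∑ i ∈ J, ∑ j ∈ Jᶜ, g i j)
        + ((∑ i ∈ Jᶜ, ∑ j ∈ J, g i j) + (∑ i ∈ Jᶜ, ∑ j ∈ Jᶜ, g i j)) := by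
    rw [hnorm Finset.univ]
    rw [← Finset.sum_add_sum_compl J (fun i => ∑ j, g i j)]
    congr 1
    · rw [← Finset.sum_add_distrib]
      exact Finset.sum_congr rfl fun i _ => (Finset.sum_add_sum_compl J _).symm
    · rw [← Finset.sum_add_distrib]
      exact Finset.sum_congr rfl fun i _ => (Finset.sum_add_sum_compl J _).symm
  have hC : (0:ℝ) ≤ ∑ i ∈ Jᶜ, ∑ j ∈ Jᶜ, g i j := by
    rw [← hnorm Jᶜ]; positivity
  have hdiag : ∀ i : Fin M, g i i = (u i) ^ 2 * ‖f i‖ ^ 2 := by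
    intro i
    show u i * u i * (inner ℝ (f i) (f i) : ℝ) = (u i) ^ 2 * ‖f i‖ ^ 2
    rw [real_inner_self_eq_norm_sq]; ring
  -- J×J block
  have hJJ : (∑ j ∈ J, (u j) ^ 2 * ‖f j‖ ^ 2) - ρ * (∑ j ∈ J, a j) ^ 2
      ≤ ∑ i ∈ J, ∑ j ∈ J, g i j := by
    have hdec : ∀ i ∈ J, g i i + ∑ j ∈ J.erase i, g i j = ∑ j ∈ J, g i j :=
      fun i hi => Finset.add_sum_erase J (g i) hi
    have hoff : ∀ i ∈ J, -(ρ * ∑ j ∈ J, a i * a j) ≤ ∑ j ∈ J.erase i, g i j := by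
      intro i hi
      have h1 : ∑ j ∈ J.erase i, -(ρ * (a i * a j)) ≤ ∑ j ∈ J.erase i, g i j :=
        Finset.sum_le_sum fun j hj => hbound i hi j (Finset.ne_of_mem_erase hj)
      have h2 : ∑ j ∈ J.erase i, ρ * (a i * a j) ≤ ∑ j ∈ J, ρ * (a i * a j) :=
        Finset.sum_le_sum_of_subset_of_nonneg (Finset.erase_subset i J)
          (fun j _ _ => by positivity)
      rw [Finset.sum_neg_distrib] at h1
      have h3 : ρ * ∑ j ∈ J, a i * a j = ∑ j ∈ J, ρ * (a i * a j) := by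
        rw [Finset.mul_sum]
      rw [h3]
      linarith
    have hsq : ρ * (∑ j ∈ J, a j) ^ 2 = ∑ i ∈ J, ρ * ∑ j ∈ J, a i * a j := by
      rw [sq, Finset.sum_mul_sum, Finset.mul_sum]
    calc (∑ j ∈ J, (u j) ^ 2 * ‖f j‖ ^ 2) - ρ * (∑ j ∈ J, a j) ^ 2
        = ∑ i ∈ J, ((u i) ^ 2 * ‖f i‖ ^ 2 - ρ * ∑ j ∈ J, a i * a j) := by
          rw [Finset.sum_sub_distrib, hsq]
      _ ≤ ∑ i ∈ J, (g i i + ∑ j ∈ J.erase i, g i j) :=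
          Finset.sum_le_sum fun i hi => by
            have := hoff i hi; rw [hdiag i]; linarith
      _ = ∑ i ∈ J, ∑ j ∈ J, g i j := Finset.sum_congr rfl hdec
  -- cross blocks
  have heq1 : ∑ i ∈ J, ∑ j ∈ Jᶜ, -(ρ * (a i * a j))
      = -(ρ * ((∑ j ∈ J, a j) * ∑ j ∈ Jᶜ, a j)) := by
    simp only [Finset.sum_neg_distrib]
    rw [Finset.sum_mul_sum]
    simp only [Finset.mul_sum]
  have hcross1 : -(ρ * ((∑ j ∈ J, a j) * ∑ j ∈ Jᶜ, a j))
      ≤ ∑ i ∈ J, ∑ j ∈ Jᶜ, g i j := by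
    rw [← heq1]
    refine Finset.sum_le_sum fun i hi => Finset.sum_le_sum fun j hj => ?_
    exact hbound i hi j (fun h => (Finset.mem_compl.mp hj) (h ▸ hi))
  have heq2 : ∑ i ∈ Jᶜ, ∑ j ∈ J, -(ρ * (a i * a j))
      = -(ρ * ((∑ j ∈ J, a j) * ∑ j ∈ Jᶜ, a j)) := by
    simp only [Finset.sum_neg_distrib]
    rw [mul_comm (∑ j ∈ J, a j) (∑ j ∈ Jᶜ, a j), Finset.sum_mul_sum]
    simp only [Finset.mul_sum]
  have hcross2 : -(ρ * ((∑ j ∈ J, a j) * ∑ j ∈ Jᶜ, a j))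
      ≤ ∑ i ∈ Jᶜ, ∑ j ∈ J, g i j := by
    rw [← heq2]
    refine Finset.sum_le_sum fun i hi => Finset.sum_le_sum fun j hj => ?_
    have hne : i ≠ j := fun h => (Finset.mem_compl.mp hi) (h ▸ hj)
    have hb := hbound j hj i hne
    have hcomm : g i j = g j i := by
      show u i * u j * (inner ℝ (f i) (f j) : ℝ) = u j * u i * (inner ℝ (f j) (f i) : ℝ)
      rw [real_inner_comm]; ring
    rw [hcomm]
    linarith [hb]
  have hU : ∑ j, a j = ∑ j ∈ J, a j + ∑ j ∈ Jᶜ, a j :=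
    (Finset.sum_add_sum_compl J a).symm
  rw [hsplit, hU]
  nlinarith [hJJ, hcross1, hcross2, hC]
end

section
/- With the notation of the previous coherence bound, if additionally U(J)² ≤ |J|·∑_{j∈J} u_j²‖f_j‖² (Cauchy–Schwarz), then U(J) ≤ 2ρ|J|·U + √|J|·‖∑_{j=1}^M u_j f_j‖. -/
open Finset

set_option maxHeartbeats 1000000

/-- with the Cauchy–Schwarz relation U(J)² ≤ |J|·∑_{j∈J} u_j²‖f_j‖²,
one gets U(J) ≤ 2ρ|J|·U + √|J|·‖∑_j u_j f_j‖. -/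
theorem spades_local_coherence_U_bound {M : ℕ} {V : Type*} [NormedAddCommGroup V]
    [InnerProductSpace ℝ V] (f : Fin M → V) (hf : ∀ j, f j ≠ 0)
    (u : Fin M → ℝ) (J : Finset (Fin M)) (ρ : ℝ) (hρ0 : 0 ≤ ρ)
    (hρ : ∀ i ∈ J, ∀ j, j ≠ i → |(inner ℝ (f i) (f j) : ℝ)| ≤ ρ * (‖f i‖ * ‖f j‖))
    (hCS : (∑ j ∈ J, |u j| * ‖f j‖) ^ 2 ≤ (J.card : ℝ) * ∑ j ∈ J, (u j) ^ 2 * ‖f j‖ ^ 2) :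
    ∑ j ∈ J, |u j| * ‖f j‖
      ≤ 2 * ρ * (J.card : ℝ) * (∑ j, |u j| * ‖f j‖)
        + Real.sqrt (J.card : ℝ) * ‖∑ j, u j • f j‖ := by
  classical
  set S : V := ∑ j, u j • f j with hSdef
  set g : V := ∑ j ∈ J, u j • f j with hgdef
  set A : ℝ := ∑ j ∈ J, |u j| * ‖f j‖ with hAdef
  set Uu : ℝ := ∑ j, |u j| * ‖f j‖ with hUdef
  set Q : ℝ := ∑ j ∈ J, (u j) ^ 2 * ‖f j‖ ^ 2 with hQdef
  set n : ℝ := (J.card : ℝ) with hndef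
  have hA0 : 0 ≤ A := sum_nonneg fun j _ => mul_nonneg (abs_nonneg _) (norm_nonneg _)
  have hU0 : 0 ≤ Uu := sum_nonneg fun j _ => mul_nonneg (abs_nonneg _) (norm_nonneg _)
  have hQ0 : 0 ≤ Q := sum_nonneg fun j _ =>
    mul_nonneg (sq_nonneg _) (sq_nonneg _)
  have hn0 : (0:ℝ) ≤ n := Nat.cast_nonneg _
  -- error-term bound
  have hEbound : ∀ (T : Fin M → Finset (Fin M)), (∀ i, T i ⊆ univ.erase i) →
      |∑ i ∈ J, ∑ j ∈ T i, (u i * u j) * (inner ℝ (f i) (f j) : ℝ)| ≤ ρ * A * Uu := by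
    intro T hT
    calc |∑ i ∈ J, ∑ j ∈ T i, (u i * u j) * (inner ℝ (f i) (f j) : ℝ)|
        ≤ ∑ i ∈ J, |∑ j ∈ T i, (u i * u j) * (inner ℝ (f i) (f j) : ℝ)| :=
          abs_sum_le_sum_abs _ _
      _ ≤ ∑ i ∈ J, ∑ j ∈ T i, |(u i * u j) * (inner ℝ (f i) (f j) : ℝ)| :=
          sum_le_sum fun i _ => abs_sum_le_sum_abs _ _
      _ ≤ ∑ i ∈ J, ∑ j ∈ T i, ρ * ((|u i| * ‖f i‖) * (|u j| * ‖f j‖)) := by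
          refine sum_le_sum fun i hi => sum_le_sum fun j hj => ?_
          have hji : j ≠ i := (Finset.mem_erase.mp (hT i hj)).1
          have h1 := hρ i hi j hji
          rw [abs_mul, abs_mul]
          calc |u i| * |u j| * |(inner ℝ (f i) (f j) : ℝ)|
              ≤ |u i| * |u j| * (ρ * (‖f i‖ * ‖f j‖)) :=
                mul_le_mul_of_nonneg_left h1 (mul_nonneg (abs_nonneg _) (abs_nonneg _))
            _ = ρ * ((|u i| * ‖f i‖) * (|u j| * ‖f j‖)) := by ring
      _ ≤ ∑ i ∈ J, ρ * ((|u i| * ‖f i‖) * Uu) := by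
          refine sum_le_sum fun i hi => ?_
          have hsub : ∑ j ∈ T i, |u j| * ‖f j‖ ≤ Uu := by
            refine sum_le_sum_of_subset_of_nonneg ((hT i).trans (erase_subset _ _))
              fun j _ _ => mul_nonneg (abs_nonneg _) (norm_nonneg _)
          calc ∑ j ∈ T i, ρ * ((|u i| * ‖f i‖) * (|u j| * ‖f j‖))
              = ρ * ((|u i| * ‖f i‖) * ∑ j ∈ T i, |u j| * ‖f j‖) := by
                rw [mul_sum, mul_sum]
            _ ≤ ρ * ((|u i| * ‖f i‖) * Uu) := by
                refine mul_le_mul_of_nonneg_left ?_ hρ0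
                exact mul_le_mul_of_nonneg_left hsub
                  (mul_nonneg (abs_nonneg _) (norm_nonneg _))
      _ = ∑ i ∈ J, (|u i| * ‖f i‖) * (ρ * Uu) := sum_congr rfl fun i _ => by ring
      _ = A * (ρ * Uu) := by rw [← sum_mul]
      _ = ρ * A * Uu := by ring
  -- Q ≤ ⟨g, S⟩ + ρ A Uu
  have hGS : (inner ℝ g S : ℝ)
      = Q + ∑ i ∈ J, ∑ j ∈ univ.erase i, (u i * u j) * (inner ℝ (f i) (f j) : ℝ) := by
    rw [hgdef, hSdef, sum_inner, hQdef, ← Finset.sum_add_distrib]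
    refine sum_congr rfl fun i _ => ?_
    rw [inner_sum]
    have : ∀ j, (inner ℝ (u i • f i) (u j • f j) : ℝ) = (u i * u j) * (inner ℝ (f i) (f j) : ℝ) := by
      intro j; rw [real_inner_smul_left, real_inner_smul_right]; ring
    simp_rw [this]
    rw [← Finset.add_sum_erase _ _ (mem_univ i), real_inner_self_eq_norm_sq]
    ring
  have hE1 := abs_le.mp (hEbound (fun i => univ.erase i) fun i => le_refl _)
  have hQle : Q ≤ (inner ℝ g S : ℝ) + ρ * A * Uu := by
    rw [hGS]; linarith [hE1.1]
  -- ‖g‖² ≤ Q + ρ A Uu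
  have hGG : ‖g‖ ^ 2
      = Q + ∑ i ∈ J, ∑ j ∈ J.erase i, (u i * u j) * (inner ℝ (f i) (f j) : ℝ) := by
    rw [← real_inner_self_eq_norm_sq, hgdef, sum_inner, hQdef, ← Finset.sum_add_distrib]
    refine sum_congr rfl fun i hi => ?_
    rw [inner_sum]
    have : ∀ j, (inner ℝ (u i • f i) (u j • f j) : ℝ) = (u i * u j) * (inner ℝ (f i) (f j) : ℝ) := by
      intro j; rw [real_inner_smul_left, real_inner_smul_right]; ring
    simp_rw [this]
    rw [← Finset.add_sum_erase _ _ hi, real_inner_self_eq_norm_sq]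
    ring
  have hE2 := abs_le.mp (hEbound (fun i => J.erase i)
    fun i => Finset.erase_subset_erase i (subset_univ J))
  have hg2 : ‖g‖ ^ 2 ≤ Q + ρ * A * Uu := by
    rw [hGG]; linarith [hE2.2]
  have hQS : Q ≤ ‖g‖ * ‖S‖ + ρ * A * Uu :=
    hQle.trans (add_le_add_left (real_inner_le_norm g S) _)
  -- arithmetic
  set y : ℝ := n * Q + n * (ρ * A * Uu) with hydef
  have hρAU : 0 ≤ ρ * A * Uu := mul_nonneg (mul_nonneg hρ0 hA0) hU0
  have hxy : A ^ 2 ≤ y := by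
    have h1 : 0 ≤ n * (ρ * A * Uu) := mul_nonneg hn0 hρAU
    rw [hydef]; linarith [hCS]
  by_contra hcon
  push_neg at hcon
  have hApos : 0 < A := lt_of_le_of_lt
    (by positivity : (0:ℝ) ≤ 2 * ρ * n * Uu + Real.sqrt n * ‖S‖) hcon
  have hypos : 0 < y := lt_of_lt_of_le (pow_pos hApos 2) hxy
  have hsy : 0 < Real.sqrt y := Real.sqrt_pos.mpr hypos
  have hAsy : A ≤ Real.sqrt y := by
    have := Real.sqrt_le_sqrt hxy
    rwa [Real.sqrt_sq hA0] at this
  -- y ≤ (√n ‖S‖) √y + 2 n ρ A Uu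
  have hng : n * ‖g‖ ^ 2 ≤ y := by
    have h := mul_le_mul_of_nonneg_left hg2 hn0
    rw [mul_add] at h
    rw [hydef]; linarith
  have hsg : Real.sqrt n * ‖g‖ ≤ Real.sqrt y := by
    have h1 : Real.sqrt (n * ‖g‖ ^ 2) ≤ Real.sqrt y := Real.sqrt_le_sqrt hng
    rwa [Real.sqrt_mul hn0, Real.sqrt_sq (norm_nonneg _)] at h1
  have t1 : n * Q ≤ n * (‖g‖ * ‖S‖) + n * (ρ * A * Uu) := by
    have h := mul_le_mul_of_nonneg_left hQS hn0
    rw [mul_add] at h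
    linarith
  have e1 : n * (‖g‖ * ‖S‖) = (Real.sqrt n * ‖g‖) * (Real.sqrt n * ‖S‖) := by
    have h2 : Real.sqrt n * Real.sqrt n = n := Real.mul_self_sqrt hn0
    linear_combination (-(‖g‖ * ‖S‖)) * h2
  have t4 : (Real.sqrt n * ‖g‖) * (Real.sqrt n * ‖S‖)
      ≤ Real.sqrt y * (Real.sqrt n * ‖S‖) :=
    mul_le_mul_of_nonneg_right hsg (by positivity)
  have hyb : y ≤ Real.sqrt y * (Real.sqrt n * ‖S‖) + 2 * (n * (ρ * A * Uu)) := by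
    rw [hydef]; linarith [t1, t4, e1]
  -- contradiction
  have t5 : (ρ * n * Uu) * A ≤ (ρ * n * Uu) * Real.sqrt y :=
    mul_le_mul_of_nonneg_left hAsy (by positivity)
  have t6 : (Real.sqrt n * ‖S‖ + 2 * (ρ * n * Uu)) * Real.sqrt y < A * Real.sqrt y :=
    mul_lt_mul_of_pos_right (by linarith [hcon]) hsy
  have t7 : A * Real.sqrt y ≤ y := by
    calc A * Real.sqrt y ≤ Real.sqrt y * Real.sqrt y :=
          mul_le_mul_of_nonneg_right hAsy hsy.le
      _ = y := Real.mul_self_sqrt hypos.le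
  nlinarith [hyb, t5, t6, t7]
end

section
/- Any two minimizers λ̄⁽¹⁾, λ̄⁽²⁾ of the convex function g(λ) = −(2/n)∑_{i=1}^n f_λ(X_i) + ‖f_λ‖² + 8rL∑_k |λ_k| satisfy ∑_{j=1}^M (λ̄_j⁽¹⁾ − λ̄_j⁽²⁾)⟨f_j, f_k⟩ = 0 for all k ∈ {1,…,M}; equivalently, f_{λ̄⁽¹⁾} = f_{λ̄⁽²⁾} in L². Consequently, all minimizers have the same set {k : |(1/n)∑_i f_k(X_i) − ∑_j λ̄_j⟨f_j,f_k⟩| = 4rL} containing the supports of all minimizers. -/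
open MeasureTheory Finset

private lemma l2_mul_integrable {α : Type*} [MeasurableSpace α] {μ : Measure α} {f g : α → ℝ}
    (hf : MemLp f 2 μ) (hg : MemLp g 2 μ) : Integrable (fun x => f x * g x) μ := by
  have h : MemLp (f • g) 1 μ := hg.smul hf (hpqr := ⟨by simp [ENNReal.inv_two_add_inv_two]⟩)
  exact memLp_one_iff_integrable.mp h

/-- Lemma A.1(II): any two minimizers λ̄⁽¹⁾, λ̄⁽²⁾ of
g(λ) = −(2/n)∑_i f_λ(X_i) + ‖f_λ‖² + 8rL∑_k|λ_k| satisfy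
∑_j (λ̄_j⁽¹⁾ − λ̄_j⁽²⁾)⟨f_j,f_k⟩ = 0 for all k, equivalently f_{λ̄⁽¹⁾} = f_{λ̄⁽²⁾} in L²;
consequently the sets {k : |(1/n)∑_i f_k(X_i) − ∑_j λ̄_j⟨f_j,f_k⟩| = 4rL} coincide. -/
theorem spades_minimizers_same_support {d n M : ℕ} (hn : 0 < n)
    (X : Fin n → (Fin d → ℝ)) (fj : Fin M → (Fin d → ℝ) → ℝ)
    (hfj : ∀ j, MemLp (fj j) 2 (volume : Measure (Fin d → ℝ)))
    (r L : ℝ) (hr : 0 < r) (hL : 0 < L)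
    (lam1 lam2 : Fin M → ℝ)
    (hmin1 : ∀ lam : Fin M → ℝ,
      -(2 / n : ℝ) * ∑ i, ∑ j, lam1 j * fj j (X i)
          + (∫ x, (∑ j, lam1 j * fj j x) ^ 2) + 8 * r * L * ∑ k, |lam1 k|
        ≤ -(2 / n : ℝ) * ∑ i, ∑ j, lam j * fj j (X i)
          + (∫ x, (∑ j, lam j * fj j x) ^ 2) + 8 * r * L * ∑ k, |lam k|)
    (hmin2 : ∀ lam : Fin M → ℝ,
      -(2 / n : ℝ) * ∑ i, ∑ j, lam2 j * fj j (X i)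
          + (∫ x, (∑ j, lam2 j * fj j x) ^ 2) + 8 * r * L * ∑ k, |lam2 k|
        ≤ -(2 / n : ℝ) * ∑ i, ∑ j, lam j * fj j (X i)
          + (∫ x, (∑ j, lam j * fj j x) ^ 2) + 8 * r * L * ∑ k, |lam k|) :
    (∀ k : Fin M, ∑ j, (lam1 j - lam2 j) * ∫ x, fj j x * fj k x = 0)
    ∧ (∫ x, (∑ j, lam1 j * fj j x - ∑ j, lam2 j * fj j x) ^ 2) = 0
    ∧ {k : Fin M |
          |(n : ℝ)⁻¹ * ∑ i, fj k (X i) - ∑ j, lam1 j * ∫ x, fj j x * fj k x| = 4 * r * L}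
        = {k : Fin M |
          |(n : ℝ)⁻¹ * ∑ i, fj k (X i) - ∑ j, lam2 j * ∫ x, fj j x * fj k x| = 4 * r * L} := by
  -- abbreviations
  set μ : Measure (Fin d → ℝ) := volume
  have memsum : ∀ lam : Fin M → ℝ, MemLp (fun x => ∑ j, lam j * fj j x) 2 μ := by
    intro lam
    have h := memLp_finset_sum' (μ := μ) Finset.univ (fun j _ => (hfj j).const_mul (lam j))
    rwa [show (∑ j : Fin M, fun x => lam j * fj j x) = (fun x => ∑ j : Fin M, lam j * fj j x)
      from funext fun x => by simp] at h
  set F1 : (Fin d → ℝ) → ℝ := fun x => ∑ j, lam1 j * fj j x with hF1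
  set F2 : (Fin d → ℝ) → ℝ := fun x => ∑ j, lam2 j * fj j x with hF2
  have hF1m : MemLp F1 2 μ := memsum lam1
  have hF2m : MemLp F2 2 μ := memsum lam2
  have hDm : MemLp (fun x => F1 x - F2 x) 2 μ := hF1m.sub hF2m
  have hMm : MemLp (fun x => (F1 x + F2 x) / 2) 2 μ := by
    have := (hF1m.add hF2m).const_mul (2⁻¹ : ℝ)
    simpa [div_eq_inv_mul] using this
  -- midpoint
  set mid : Fin M → ℝ := fun j => (lam1 j + lam2 j) / 2 with hmid
  have hmidsum : ∀ x, (∑ j, mid j * fj j x) = (F1 x + F2 x) / 2 := by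
    intro x
    have h : F1 x + F2 x = ∑ j, (lam1 j * fj j x + lam2 j * fj j x) :=
      Finset.sum_add_distrib.symm
    rw [h, Finset.sum_div]
    refine Finset.sum_congr rfl fun j _ => ?_
    simp only [hmid]
    ring
  -- quadratic identity
  have hquad : (∫ x, (∑ j, mid j * fj j x) ^ 2 ∂μ)
      = ((∫ x, F1 x ^ 2 ∂μ) + ∫ x, F2 x ^ 2 ∂μ) / 2
        - (∫ x, (F1 x - F2 x) ^ 2 ∂μ) / 4 := by
    have key : ∀ x, ((F1 x + F2 x) / 2) ^ 2
        = F1 x ^ 2 / 2 + F2 x ^ 2 / 2 - (F1 x - F2 x) ^ 2 / 4 := by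
      intro x; ring
    have h1 : Integrable (fun x => F1 x ^ 2) μ := hF1m.integrable_sq
    have h2 : Integrable (fun x => F2 x ^ 2) μ := hF2m.integrable_sq
    have hD : Integrable (fun x => (F1 x - F2 x) ^ 2) μ := hDm.integrable_sq
    calc (∫ x, (∑ j, mid j * fj j x) ^ 2 ∂μ)
        = ∫ x, (F1 x ^ 2 / 2 + F2 x ^ 2 / 2 - (F1 x - F2 x) ^ 2 / 4) ∂μ := by
          refine integral_congr_ae (Filter.Eventually.of_forall fun x => ?_)
          dsimp only
          rw [hmidsum x, key x]
      _ = ((∫ x, F1 x ^ 2 ∂μ) + ∫ x, F2 x ^ 2 ∂μ) / 2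
            - (∫ x, (F1 x - F2 x) ^ 2 ∂μ) / 4 := by
          have h12 : Integrable (fun x => F1 x ^ 2 / 2 + F2 x ^ 2 / 2) μ :=
            (h1.div_const 2).add (h2.div_const 2)
          have hD4 : Integrable (fun x => (F1 x - F2 x) ^ 2 / 4) μ := hD.div_const 4
          rw [integral_sub h12 hD4, integral_add (h1.div_const 2) (h2.div_const 2),
            integral_div, integral_div, integral_div]
          ring
  -- linear data part
  have hlin : (∑ i, ∑ j, mid j * fj j (X i))
      = ((∑ i, ∑ j, lam1 j * fj j (X i)) + ∑ i, ∑ j, lam2 j * fj j (X i)) / 2 := by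
    rw [← Finset.sum_add_distrib, Finset.sum_div]
    exact Finset.sum_congr rfl fun i _ => hmidsum (X i)
  -- penalty part
  have hpen : (∑ k, |mid k|) ≤ ((∑ k, |lam1 k|) + ∑ k, |lam2 k|) / 2 := by
    have h : ((∑ k, |lam1 k|) + ∑ k, |lam2 k|) / 2 = ∑ k, (|lam1 k| + |lam2 k|) / 2 := by
      rw [← Finset.sum_add_distrib, Finset.sum_div]
    rw [h]
    refine Finset.sum_le_sum fun k _ => ?_
    simp only [hmid]
    calc |(lam1 k + lam2 k) / 2| = |lam1 k + lam2 k| / 2 := by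
          rw [abs_div]; norm_num
      _ ≤ (|lam1 k| + |lam2 k|) / 2 := by
          gcongr; exact abs_add_le _ _
  set Q : ℝ := ∫ x, (F1 x - F2 x) ^ 2 ∂μ with hQdef
  have hQnonneg : 0 ≤ Q := integral_nonneg fun x => sq_nonneg _
  have hQ0 : Q = 0 := by
    have h12 := hmin1 lam2
    have h21 := hmin2 lam1
    have hm := hmin1 mid
    rw [hquad, hlin] at hm
    have h8 : (0:ℝ) < 8 * r * L := by positivity
    nlinarith [mul_le_mul_of_nonneg_left hpen (le_of_lt h8)]
  -- F1 = F2 a.e.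
  have haeD : (fun x => F1 x - F2 x) =ᵐ[μ] 0 := by
    have hD : Integrable (fun x => (F1 x - F2 x) ^ 2) μ := hDm.integrable_sq
    have := (integral_eq_zero_iff_of_nonneg (fun x => sq_nonneg (F1 x - F2 x)) hD).mp hQ0
    filter_upwards [this] with x hx
    have : (F1 x - F2 x) ^ 2 = 0 := hx
    simpa [sub_eq_zero, pow_eq_zero_iff] using pow_eq_zero_iff (n := 2) (by norm_num) |>.mp this
  -- claim 1
  have claim1 : ∀ k : Fin M, ∑ j, (lam1 j - lam2 j) * ∫ x, fj j x * fj k x = 0 := by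
    intro k
    have hjk : ∀ j : Fin M, Integrable (fun x => fj j x * fj k x) μ :=
      fun j => l2_mul_integrable (hfj j) (hfj k)
    have h1 : (∑ j, (lam1 j - lam2 j) * ∫ x, fj j x * fj k x ∂μ)
        = ∫ x, (∑ j, (lam1 j - lam2 j) * (fj j x * fj k x)) ∂μ := by
      rw [integral_finset_sum _ (fun j _ => (hjk j).const_mul _)]
      exact Finset.sum_congr rfl fun j _ => (integral_const_mul _ _).symm
    have h2 : ∀ x, (∑ j, (lam1 j - lam2 j) * (fj j x * fj k x)) = (F1 x - F2 x) * fj k x := by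
      intro x
      rw [hF1, hF2, ← Finset.sum_sub_distrib, Finset.sum_mul]
      exact Finset.sum_congr rfl fun j _ => by ring
    have h3 : (∫ x, (F1 x - F2 x) * fj k x ∂μ) = 0 := by
      have hz : (fun x => (F1 x - F2 x) * fj k x) =ᵐ[μ] 0 := by
        filter_upwards [haeD] with x hx
        have : F1 x - F2 x = 0 := hx
        simp [this]
      exact (integral_congr_ae hz).trans (by simp)
    rw [h1]
    rw [show (fun x => ∑ j, (lam1 j - lam2 j) * (fj j x * fj k x))
        = (fun x => (F1 x - F2 x) * fj k x) from funext h2]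
    exact h3
  -- claim 2
  have claim2 : (∫ x, (F1 x - F2 x) ^ 2 ∂μ) = 0 := hQ0
  refine ⟨claim1, claim2, ?_⟩
  -- claim 3: the two sums agree for each k
  have hsums : ∀ k : Fin M, (∑ j, lam1 j * ∫ x, fj j x * fj k x ∂μ)
      = ∑ j, lam2 j * ∫ x, fj j x * fj k x ∂μ := by
    intro k
    have := claim1 k
    rw [← sub_eq_zero, ← Finset.sum_sub_distrib]
    rw [← this]
    exact Finset.sum_congr rfl fun j _ => by ring
  ext k
  simp only [Set.mem_setOf_eq, hsums k]
end
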